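/- Let k ≥ 1 be an integer. A proper finite propositional logic program P has a stable model of cardinality k if and only if there exists a set A ⊆ At(P) with |A| = k − 1 such that P has an A-based stable model. -/
import Mathlib


open scoped Classical

noncomputable section

/-- A propositional logic program rule: a head atom, a finite positive body and a
finite negative body. -/
structure LPRule (α : Type) where
  head : α
  pos : Finset α
  neg : Finset α
deriving DecidableEq

/-- A logic program is a finite set of rules. -/
abbrev LProgram (α : Type) := Finset (LPRule α)

variable {α : Type} [DecidableEq α]

/-- `horn r`: the Horn rule with the same head and positive body as `r`
and empty negative body. -/
def LPRule.horn (r : LPRule α) : LPRule α := ⟨r.head, r.pos, ∅⟩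

/-- A rule `r` is proper if `h(r) ∉ b⁺(r)` and `b⁺(r) ∩ b⁻(r) = ∅`. -/
def LPRule.proper (r : LPRule α) : Prop := r.head ∉ r.pos ∧ r.pos ∩ r.neg = ∅

/-- `At(P)`: the set of atoms occurring in `P`. -/
def atomsP (P : LProgram α) : Finset α := P.sup (fun r => insert r.head (r.pos ∪ r.neg))

/-- `h(P)`: the set of heads of rules of `P`. -/
def headsP (P : LProgram α) : Finset α := P.image LPRule.head

/-- `Neg(P)`: the set of atoms occurring negated in `P`. -/
def negP (P : LProgram α) : Finset α := P.sup LPRule.neg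

/-- The least model of a (Horn) program `Q`, given as a set of rules (negative bodies
are ignored; Horn rules have empty negative bodies): the least set `M` of atoms such
that `h(r) ∈ M` whenever `r ∈ Q` and `b⁺(r) ⊆ M`. -/
def LM (Q : Set (LPRule α)) : Set α :=
  ⋂₀ {M : Set α | ∀ r ∈ Q, (↑r.pos : Set α) ⊆ M → r.head ∈ M}

/-- The reduct `P^S`: delete every rule whose negative body meets `S` and remove the
negative bodies of the remaining rules. -/
def reduct (P : LProgram α) (S : Set α) : Set (LPRule α) :=
  LPRule.horn '' {r | r ∈ P ∧ (↑r.neg : Set α) ∩ S = ∅}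

/-- `M` is a stable model of `P` if `M = LM (P^M)`. -/
def isStable (P : LProgram α) (M : Set α) : Prop :=
  M = LM (reduct P M)

/-- `P(A)`: the rules `r` of `P` with `b⁻(r) ∩ A = ∅` and `b⁺(r) ⊆ A`. -/
def progA (P : LProgram α) (A : Set α) : LProgram α :=
  P.filter (fun r => (↑r.pos : Set α) ⊆ A ∧ (↑r.neg : Set α) ∩ A = ∅)

/-- `M` is an `A`-based stable model of `P`: `M` is a stable model of `P` of the form
`A ∪ {a}` for some atom `a ∉ A`, and `M ⊆ LM (P(A)^M)`. -/
def isABased (P : LProgram α) (A M : Set α) : Prop :=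
  isStable P M ∧ ∃ a, a ∉ A ∧ M = A ∪ {a} ∧ M ⊆ LM (reduct (progA P A) M)

-- AUX START
/-- Derivability with fuel in a (Horn) program. -/
inductive Deriv (Q : Set (LPRule α)) : ℕ → α → Prop
  | step (r : LPRule α) (n : ℕ) (hr : r ∈ Q) (h : ∀ c ∈ r.pos, Deriv Q n c) :
      Deriv Q (n + 1) r.head

theorem Deriv.mono {Q : Set (LPRule α)} {n : ℕ} {a : α} (h : Deriv Q n a) :
    ∀ m, n ≤ m → Deriv Q m a := by
  induction h with
  | step r n hr h ih =>
    intro m hm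
    obtain ⟨j, hj⟩ : ∃ j, m = j + 1 := ⟨m - 1, by omega⟩
    subst hj
    exact Deriv.step r j hr (fun c hc => ih c hc j (by omega))

theorem lm_prefixed (Q : Set (LPRule α)) :
    ∀ r ∈ Q, (↑r.pos : Set α) ⊆ LM Q → r.head ∈ LM Q := by
  intro r hr hpos M hM
  exact hM r hr (fun c hc => hpos hc M hM)

theorem deriv_mem_lm {Q : Set (LPRule α)} {n : ℕ} {a : α} (h : Deriv Q n a) : a ∈ LM Q := by
  induction h with
  | step r n hr h ih => exact lm_prefixed Q r hr (fun c hc => ih c hc)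

theorem exists_fuel {Q : Set (LPRule α)} (s : Finset α)
    (h : ∀ c ∈ s, ∃ n, Deriv Q n c) : ∃ n, ∀ c ∈ s, Deriv Q n c := by
  classical
  induction s using Finset.induction_on with
  | empty => exact ⟨0, by simp⟩
  | @insert a s ha ih =>
    obtain ⟨n, hn⟩ := ih (fun c hc => h c (Finset.mem_insert_of_mem hc))
    obtain ⟨m, hm⟩ := h a (Finset.mem_insert_self a s)
    refine ⟨max n m, fun c hc => ?_⟩
    rcases Finset.mem_insert.1 hc with rfl | hc
    · exact hm.mono _ (le_max_right n m)
    · exact (hn c hc).mono _ (le_max_left n m)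

theorem lm_mem_deriv {Q : Set (LPRule α)} {a : α} (h : a ∈ LM Q) : ∃ n, Deriv Q n a := by
  refine h {x | ∃ n, Deriv Q n x} ?_
  intro r hr hpos
  obtain ⟨n, hn⟩ := exists_fuel r.pos (fun c hc => hpos hc)
  exact ⟨n + 1, Deriv.step r n hr hn⟩

theorem deriv_elim {Q : Set (LPRule α)} {n : ℕ} {b : α} (h : Deriv Q n b) :
    ∃ r m, r ∈ Q ∧ r.head = b ∧ n = m + 1 ∧ ∀ c ∈ r.pos, Deriv Q m c := by
  cases h with
  | step r m hr hp => exact ⟨r, m, hr, rfl, rfl, hp⟩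

theorem lm_reduct_subset_atoms (P : LProgram α) (S : Set α) :
    LM (reduct P S) ⊆ ↑(atomsP P) := by
  intro x hx
  refine hx ↑(atomsP P) ?_
  rintro r ⟨r', ⟨hr', -⟩, rfl⟩ -
  show r'.head ∈ (atomsP P : Set α)
  exact_mod_cast Finset.mem_sup.2 ⟨r', hr', Finset.mem_insert_self _ _⟩
-- AUX END


/-- for `k ≥ 1`, a proper program `P` has a stable model of cardinality `k`
iff there exists `A ⊆ At(P)` with `|A| = k - 1` such that `P` has an `A`-based stable
model. -/
theorem stable_card_iff_based (k : ℕ) (hk : 1 ≤ k) (P : LProgram α)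
    (hP : ∀ r ∈ P, r.proper) :
    (∃ M : Finset α, M.card = k ∧ isStable P ↑M) ↔
      (∃ A : Finset α, A ⊆ atomsP P ∧ A.card = k - 1 ∧
        ∃ M : Set α, isABased P ↑A M) := by
  constructor
  · rintro ⟨M, hcard, hst⟩
    set Q := reduct P ↑M with hQ
    have hMlm : (↑M : Set α) = LM Q := hst
    have hder : ∀ b ∈ M, ∃ n, Deriv Q n b := fun b hb =>
      lm_mem_deriv (hMlm ▸ (Finset.mem_coe.2 hb))
    set rk : α → ℕ := fun b => sInf {n | Deriv Q n b} with hrk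
    have hMne : M.Nonempty := Finset.card_pos.1 (by omega)
    obtain ⟨a, haM, hmax⟩ := M.exists_max_image rk hMne
    set A : Finset α := M.erase a with hA
    have hAsubM : (↑A : Set α) ⊆ ↑M := Finset.coe_subset.2 (Finset.erase_subset a M)
    -- key claim
    have key : ∀ n b, b ∈ M → rk b ≤ n → b ∈ LM (reduct (progA P ↑A) ↑M) := by
      intro n
      induction n using Nat.strong_induction_on with
      | _ n ih =>
        intro b hb hrkb
        have hbd : Deriv Q (rk b) b := Nat.sInf_mem (hder b hb)
        obtain ⟨r, m, hrQ, hhead, hmeq, hpos⟩ := deriv_elim hbd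
        have hposA : ∀ c ∈ r.pos, c ∈ A := by
          intro c hc
          have hcM : c ∈ M := by
            have := deriv_mem_lm (hpos c hc)
            rw [← hMlm] at this
            exact Finset.mem_coe.1 this
          have hrc : rk c ≤ m := Nat.sInf_le (hpos c hc)
          have hrcb : rk c < rk b := by omega
          have hca : c ≠ a := fun h => by
            have := hmax b hb
            rw [h] at hrcb; omega
          exact Finset.mem_erase.2 ⟨hca, hcM⟩
        have hposlm : (↑r.pos : Set α) ⊆ LM (reduct (progA P ↑A) ↑M) := by
          intro c hc
          have hc' := Finset.mem_coe.1 hc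
          have hcM : c ∈ M := (Finset.mem_erase.1 (hposA c hc')).2
          have hrc : rk c ≤ m := Nat.sInf_le (hpos c hc')
          exact ih m (by omega) c hcM hrc
        obtain ⟨r', ⟨hr'P, hr'neg⟩, rfl⟩ := hrQ
        have hr'A : r' ∈ progA P ↑A := by
          refine Finset.mem_filter.2 ⟨hr'P, ?_, ?_⟩
          · intro c hc; exact Finset.mem_coe.2 (hposA c (Finset.mem_coe.1 hc))
          · apply Set.eq_empty_of_subset_empty
            intro x hx
            rw [← hr'neg]
            exact ⟨hx.1, hAsubM hx.2⟩
        have : r'.horn ∈ reduct (progA P ↑A) ↑M := ⟨r', ⟨hr'A, hr'neg⟩, rfl⟩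
        rw [← hhead]
        exact lm_prefixed _ r'.horn this hposlm
    have hMatoms : M ⊆ atomsP P := by
      intro x hx
      have hx' : x ∈ LM Q := hMlm ▸ Finset.mem_coe.2 hx
      exact_mod_cast lm_reduct_subset_atoms P ↑M hx'
    refine ⟨A, ?_, ?_, ↑M, hst, a, ?_, ?_, ?_⟩
    · exact (Finset.erase_subset a M).trans hMatoms
    · rw [hA, Finset.card_erase_of_mem haM, hcard]
    · simp [hA]
    · ext x
      simp only [hA, Finset.coe_erase, Set.union_singleton, Set.mem_insert_iff,
        Set.mem_diff, Finset.mem_coe, Set.mem_singleton_iff]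
      constructor
      · intro hx
        rcases eq_or_ne x a with rfl | h
        · exact Or.inl rfl
        · exact Or.inr ⟨hx, h⟩
      · rintro (rfl | ⟨hx, -⟩)
        · exact haM
        · exact hx
    · intro b hb
      exact key (rk b) b (Finset.mem_coe.1 hb) le_rfl
  · rintro ⟨A, hA, hcard, M, hst, a, haA, hMeq, -⟩
    refine ⟨insert a A, ?_, ?_⟩
    · rw [Finset.card_insert_of_notMem (fun h => haA (Finset.mem_coe.2 h)), hcard]
      omega
    · have : (↑(insert a A) : Set α) = M := by
        rw [hMeq, Finset.coe_insert, Set.insert_eq, Set.union_comm]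
      rw [this]; exact hst
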